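/- arXiv:2104.12216 — 4 statements merged into one kernel-verified Lean document; each statement's English description precedes it below -/
import Mathlib

section
/- For all positive integers m and n, ∫₀¹ I(m,m;t) I(n,n;t) dt = 1/2 − (1/4) · C(m+n, m)² / C(2m+2n, 2m), where C(·,·) denotes the binomial coefficient. -/
open MeasureTheory intervalIntegral

/-- The beta function `B(a,b) = ∫₀¹ s^(a-1) (1-s)^(b-1) ds`. -/
noncomputable def betaFn (a b : ℝ) : ℝ := ∫ s in (0:ℝ)..1, s ^ (a - 1) * (1 - s) ^ (b - 1)

/-- The regularized incomplete beta function `I(a,b;t)`. -/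
noncomputable def regIncBeta (a b t : ℝ) : ℝ :=
  (betaFn a b)⁻¹ * ∫ s in (0:ℝ)..t, s ^ (a - 1) * (1 - s) ^ (b - 1)

/-- `ℬ(λ,λ',μ,μ',ν,ν') = (1/B(λ,λ')) ∫₀¹ t^(λ-1)(1-t)^(λ'-1) I(μ,μ';t) I(ν,ν';t) dt`. -/
noncomputable def calB (l l' m m' n n' : ℝ) : ℝ :=
  (betaFn l l')⁻¹ * ∫ t in (0:ℝ)..1,
    t ^ (l - 1) * (1 - t) ^ (l' - 1) * regIncBeta m m' t * regIncBeta n n' t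

noncomputable def Jf (a b : ℕ) : ℝ := ∫ x in (0:ℝ)..1, x ^ a * (1 - x) ^ b

lemma cont_ab (a b : ℕ) : Continuous (fun x : ℝ => x ^ a * (1 - x) ^ b) := by continuity

lemma hasDeriv_ab (a b : ℕ) (x : ℝ) :
    HasDerivAt (fun x : ℝ => x ^ (a+1) * (1 - x) ^ (b+1))
      (((a:ℝ)+1) * (x^a*(1-x)^(b+1)) - ((b:ℝ)+1) * (x^(a+1)*(1-x)^b)) x := by
  have h1 : HasDerivAt (fun x : ℝ => x ^ (a+1)) (((a:ℝ)+1) * x ^ a) x := by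
    simpa using hasDerivAt_pow (a+1) x
  have h2 : HasDerivAt (fun x : ℝ => (1 - x) ^ (b+1)) (-(((b:ℝ)+1) * (1-x) ^ b)) x := by
    have hin : HasDerivAt (fun x : ℝ => 1 - x) (-1) x := by
      simpa using (hasDerivAt_id' x).const_sub (1:ℝ)
    have := (hasDerivAt_pow (b+1) (1-x)).comp x hin
    simpa [Function.comp_def, mul_comm, mul_assoc, mul_left_comm] using this
  have := h1.mul h2
  refine this.congr_deriv ?_

  ring

lemma Jf_succ (a b : ℕ) : ((a:ℝ) + b + 2) * Jf (a+1) b = ((a:ℝ)+1) * Jf a b := by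
  have key : (∫ x in (0:ℝ)..1, (((a:ℝ)+1) * (x^a*(1-x)^(b+1)) - ((b:ℝ)+1) * (x^(a+1)*(1-x)^b)))
      = 0 := by
    rw [integral_eq_sub_of_hasDerivAt (fun x _ => hasDeriv_ab a b x)
      ((((continuous_const.mul (cont_ab a (b+1))).sub (continuous_const.mul (cont_ab (a+1) b)))).intervalIntegrable 0 1)]
    simp
  have hsplit : (∫ x in (0:ℝ)..1, (((a:ℝ)+1) * (x^a*(1-x)^(b+1)) - ((b:ℝ)+1) * (x^(a+1)*(1-x)^b)))
      = ((a:ℝ)+1) * Jf a (b+1) - ((b:ℝ)+1) * Jf (a+1) b := by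
    rw [integral_sub ((by fun_prop : Continuous fun x : ℝ => ((a:ℝ)+1) * (x^a*(1-x)^(b+1))).intervalIntegrable 0 1)
      ((by fun_prop : Continuous fun x : ℝ => ((b:ℝ)+1) * (x^(a+1)*(1-x)^b)).intervalIntegrable 0 1),
      intervalIntegral.integral_const_mul, intervalIntegral.integral_const_mul]
    rfl
  have hsub : Jf a (b+1) = Jf a b - Jf (a+1) b := by
    have : (∫ x in (0:ℝ)..1, (x^a*(1-x)^b - x^(a+1)*(1-x)^b)) = Jf a b - Jf (a+1) b := by
      rw [integral_sub ((cont_ab a b).intervalIntegrable 0 1) ((cont_ab (a+1) b).intervalIntegrable 0 1)]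
      rfl
    rw [← this]
    unfold Jf
    congr 1
    funext x
    ring
  rw [hsplit, hsub] at key
  linarith

lemma Jf_zero (b : ℕ) : Jf 0 b = 1 / ((b:ℝ)+1) := by
  have hd : ∀ x ∈ Set.uIcc (0:ℝ) 1,
      HasDerivAt (fun x : ℝ => -((1-x)^(b+1)) / ((b:ℝ)+1)) ((x:ℝ)^0 * (1-x)^b) x := by
    intro x _
    have hin : HasDerivAt (fun x : ℝ => 1 - x) (-1) x := by
      simpa using (hasDerivAt_id' x).const_sub (1:ℝ)
    have h2 := ((hasDerivAt_pow (b+1) (1-x)).comp x hin).neg.div_const ((b:ℝ)+1)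
    refine h2.congr_deriv ?_
    have hb : ((b:ℝ)+1) ≠ 0 := by positivity
    field_simp
    simp
  have := integral_eq_sub_of_hasDerivAt hd ((cont_ab 0 b).intervalIntegrable 0 1)
  unfold Jf
  rw [this]
  norm_num [neg_div]

lemma Jf_val (a b : ℕ) : Jf a b = (a.factorial : ℝ) * (b.factorial : ℝ) / ((a+b+1).factorial : ℝ) := by
  induction a with
  | zero =>
    rw [Jf_zero]
    have : (0+b+1).factorial = (b+1) * b.factorial := by
      simp [Nat.factorial_succ]
    rw [this]
    push_cast
    have hb : ((b:ℝ)+1) ≠ 0 := by positivity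
    have hf : ((b.factorial : ℝ)) ≠ 0 := by positivity
    field_simp
    try ring
  | succ a ih =>
    have h := Jf_succ a b
    rw [ih] at h
    have h2 : ((a:ℝ) + b + 2) ≠ 0 := by positivity
    have heq : Jf (a+1) b = ((a:ℝ)+1) * ((a.factorial : ℝ) * (b.factorial : ℝ) / ((a+b+1).factorial : ℝ)) / ((a:ℝ) + b + 2) := by
      field_simp at h ⊢
      linarith
    rw [heq]
    have e1 : (a+1).factorial = (a+1) * a.factorial := Nat.factorial_succ a
    have e2 : (a+1+b+1).factorial = (a+b+2) * (a+b+1).factorial := by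
      have : a+1+b+1 = (a+b+1)+1 := by omega
      rw [this, Nat.factorial_succ]
    rw [e1, e2]
    push_cast
    have hf1 : ((a.factorial : ℝ)) ≠ 0 := by positivity
    have hf2 : (((a+b+1).factorial : ℝ)) ≠ 0 := by positivity
    field_simp

lemma Jf_pos (a b : ℕ) : 0 < Jf a b := by
  rw [Jf_val]; positivity

noncomputable def G (k : ℕ) (t : ℝ) : ℝ := (Jf k k)⁻¹ * ∫ s in (0:ℝ)..t, s^k * (1-s)^k

lemma pow_fix (k : ℕ) (s : ℝ) : s ^ ((↑(k+1) : ℝ) - 1) = s ^ k := by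
  push_cast
  rw [add_sub_cancel_right, Real.rpow_natCast]

lemma betaFn_nat (k : ℕ) : betaFn (↑(k+1)) (↑(k+1)) = Jf k k := by
  unfold betaFn Jf
  congr 1
  funext s
  rw [pow_fix, pow_fix]

lemma regIncBeta_nat (k : ℕ) (t : ℝ) : regIncBeta (↑(k+1)) (↑(k+1)) t = G k t := by
  unfold regIncBeta G
  rw [betaFn_nat]
  congr 1
  congr 1
  funext s
  rw [pow_fix, pow_fix]

lemma G_hasDerivAt (k : ℕ) (t : ℝ) :
    HasDerivAt (G k) ((Jf k k)⁻¹ * (t^k * (1-t)^k)) t := by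
  have h := ((cont_ab k k).integral_hasStrictDerivAt 0 t).hasDerivAt
  exact h.const_mul ((Jf k k)⁻¹)

lemma G_cont (k : ℕ) : Continuous (G k) :=
  continuous_iff_continuousAt.2 fun t => (G_hasDerivAt k t).continuousAt

lemma G_zero (k : ℕ) : G k 0 = 0 := by simp [G]

lemma G_one (k : ℕ) : G k 1 = 1 := by
  unfold G
  rw [show (∫ s in (0:ℝ)..1, s^k * (1-s)^k) = Jf k k from rfl]
  exact inv_mul_cancel₀ (Jf_pos k k).ne'

lemma phi_hasDerivAt (k : ℕ) (s : ℝ) :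
    HasDerivAt (fun s : ℝ => s^(k+1)*(1-s)^(k+1)*(2*s-1) / (((k:ℝ)+1) * Jf k k))
      ((Jf (k+1) (k+1))⁻¹ * (s^(k+1)*(1-s)^(k+1)) - (Jf k k)⁻¹ * (s^k*(1-s)^k)) s := by
  have h2 : HasDerivAt (fun s : ℝ => 2*s-1) 2 s := by
    simpa using ((hasDerivAt_id' s).const_mul (2:ℝ)).sub_const (1:ℝ)
  have h := ((hasDeriv_ab k k s).mul h2).div_const (((k:ℝ)+1) * Jf k k)
  refine h.congr_deriv ?_
  rw [Jf_val, Jf_val]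
  have e1 : (k+1).factorial = (k+1) * k.factorial := Nat.factorial_succ k
  have e2 : ((k+1)+(k+1)+1).factorial = ((k+k+1)+2) * (((k+k+1)+1) * (k+k+1).factorial) := by
    have h3 : (k+1)+(k+1)+1 = ((k+k+1)+1)+1 := by omega
    rw [h3, Nat.factorial_succ, Nat.factorial_succ]
  rw [e1, e2]
  have hf1 : ((k.factorial : ℝ)) ≠ 0 := by positivity
  have hf2 : (((k+k+1).factorial : ℝ)) ≠ 0 := by positivity
  have hk1 : ((k:ℝ)+1) ≠ 0 := by positivity
  push_cast
  field_simp
  ring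

lemma G_rec (k : ℕ) (t : ℝ) :
    G (k+1) t = G k t + t^(k+1)*(1-t)^(k+1)*(2*t-1) / (((k:ℝ)+1) * Jf k k) := by
  have hcont : Continuous (fun s : ℝ =>
      (Jf (k+1) (k+1))⁻¹ * (s^(k+1)*(1-s)^(k+1)) - (Jf k k)⁻¹ * (s^k*(1-s)^k)) := by
    exact (continuous_const.mul (cont_ab (k+1) (k+1))).sub (continuous_const.mul (cont_ab k k))
  have hint := integral_eq_sub_of_hasDerivAt (fun s _ => phi_hasDerivAt k s)
    (hcont.intervalIntegrable 0 t)
  have hsplit : (∫ s in (0:ℝ)..t,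
      ((Jf (k+1) (k+1))⁻¹ * (s^(k+1)*(1-s)^(k+1)) - (Jf k k)⁻¹ * (s^k*(1-s)^k)))
      = G (k+1) t - G k t := by
    rw [integral_sub ((by fun_prop : Continuous fun s : ℝ => (Jf (k+1) (k+1))⁻¹ * (s^(k+1)*(1-s)^(k+1))).intervalIntegrable 0 t)
      ((by fun_prop : Continuous fun s : ℝ => (Jf k k)⁻¹ * (s^k*(1-s)^k)).intervalIntegrable 0 t),
      intervalIntegral.integral_const_mul, intervalIntegral.integral_const_mul]
    rfl
  rw [hsplit] at hint
  simp only [zero_pow, Nat.succ_ne_zero, ne_eq, not_false_eq_true, zero_mul, mul_zero, zero_div,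
    sub_zero] at hint
  linarith [hint]

lemma G0_eq (t : ℝ) : G 0 t = t := by
  have h : Jf 0 0 = 1 := by rw [Jf_zero]; norm_num
  simp [G, h]

lemma parts_base (n : ℕ) :
    ∫ t in (0:ℝ)..1, G 0 t * G n t = 1/2 - Jf (n+2) n / (2 * Jf n n) := by
  have hv : ∀ x : ℝ, HasDerivAt (fun t : ℝ => t^2/2) x x := by
    intro x
    have := (hasDerivAt_pow 2 x).div_const 2
    norm_num at this
    simpa using this
  have hparts := integral_mul_deriv_eq_deriv_mul (a := (0:ℝ)) (b := 1)
    (u := G n) (u' := fun t => (Jf n n)⁻¹ * (t^n*(1-t)^n))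
    (v := fun t : ℝ => t^2/2) (v' := fun t => t)
    (fun x _ => G_hasDerivAt n x) (fun x _ => hv x)
    ((continuous_const.mul (cont_ab n n)).intervalIntegrable 0 1)
    (continuous_id.intervalIntegrable 0 1)
  have hL : (∫ t in (0:ℝ)..1, G 0 t * G n t) = ∫ x in (0:ℝ)..1, G n x * x := by
    congr 1; funext t; rw [G0_eq]; ring
  have hR : (∫ x in (0:ℝ)..1, ((Jf n n)⁻¹ * (x^n*(1-x)^n)) * (x^2/2))
      = ((Jf n n)⁻¹ * 2⁻¹) * Jf (n+2) n := by
    rw [show (fun x : ℝ => ((Jf n n)⁻¹ * (x^n*(1-x)^n)) * (x^2/2))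
        = fun x : ℝ => ((Jf n n)⁻¹ * 2⁻¹) * (x^(n+2)*(1-x)^n) from funext fun x => by ring,
      intervalIntegral.integral_const_mul]
    rfl
  rw [hL, hparts, hR, G_one, G_zero]
  have := (Jf_pos n n).ne'
  field_simp
  ring

lemma cont_phi (k : ℕ) : Continuous
    (fun t : ℝ => t^(k+1)*(1-t)^(k+1)*(2*t-1) / (((k:ℝ)+1) * Jf k k)) := by
  apply Continuous.div_const
  exact (cont_ab (k+1) (k+1)).mul (by continuity)

lemma parts_step (k n : ℕ) :
    ∫ t in (0:ℝ)..1, (t^(k+1)*(1-t)^(k+1)*(2*t-1) / (((k:ℝ)+1) * Jf k k)) * G n t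
      = Jf (n+k+2) (n+k+2) / (((k:ℝ)+2)*((k:ℝ)+1)*Jf k k*Jf n n) := by
  set c : ℝ := ((k:ℝ)+2)*((k:ℝ)+1)*Jf k k with hc
  have hcne : c ≠ 0 := by
    have := (Jf_pos k k).ne'
    have h1 : ((k:ℝ)+2) ≠ 0 := by positivity
    have h2 : ((k:ℝ)+1) ≠ 0 := by positivity
    exact mul_ne_zero (mul_ne_zero h1 h2) this
  have hv : ∀ x : ℝ, HasDerivAt (fun t : ℝ => -(t^(k+2)*(1-t)^(k+2)) / c)
      (x^(k+1)*(1-x)^(k+1)*(2*x-1) / (((k:ℝ)+1) * Jf k k)) x := by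
    intro x
    have h := ((hasDeriv_ab (k+1) (k+1) x).neg).div_const c
    refine h.congr_deriv ?_
    rw [hc]
    have := (Jf_pos k k).ne'
    have h1 : ((k:ℝ)+2) ≠ 0 := by positivity
    have h2 : ((k:ℝ)+1) ≠ 0 := by positivity
    field_simp
    push_cast
    ring
  have hparts := integral_mul_deriv_eq_deriv_mul (a := (0:ℝ)) (b := 1)
    (u := G n) (u' := fun t => (Jf n n)⁻¹ * (t^n*(1-t)^n))
    (v := fun t : ℝ => -(t^(k+2)*(1-t)^(k+2)) / c)
    (v' := fun t => t^(k+1)*(1-t)^(k+1)*(2*t-1) / (((k:ℝ)+1) * Jf k k))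
    (fun x _ => G_hasDerivAt n x) (fun x _ => hv x)
    ((continuous_const.mul (cont_ab n n)).intervalIntegrable 0 1)
    ((cont_phi k).intervalIntegrable 0 1)
  have hL : (∫ t in (0:ℝ)..1, (t^(k+1)*(1-t)^(k+1)*(2*t-1) / (((k:ℝ)+1) * Jf k k)) * G n t)
      = ∫ x in (0:ℝ)..1, G n x * (x^(k+1)*(1-x)^(k+1)*(2*x-1) / (((k:ℝ)+1) * Jf k k)) := by
    congr 1; funext t; ring
  have hR : (∫ x in (0:ℝ)..1, ((Jf n n)⁻¹ * (x^n*(1-x)^n)) * (-(x^(k+2)*(1-x)^(k+2)) / c))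
      = -(((Jf n n)⁻¹ * c⁻¹) * Jf (n+k+2) (n+k+2)) := by
    rw [show (fun x : ℝ => ((Jf n n)⁻¹ * (x^n*(1-x)^n)) * (-(x^(k+2)*(1-x)^(k+2)) / c))
        = fun x : ℝ => (-((Jf n n)⁻¹ * c⁻¹)) * (x^(n+k+2)*(1-x)^(n+k+2)) from funext fun x => by
          field_simp; ring, intervalIntegral.integral_const_mul]
    rw [show (∫ x in (0:ℝ)..1, x^(n+k+2)*(1-x)^(n+k+2)) = Jf (n+k+2) (n+k+2) from rfl]
    ring
  rw [hL, hparts, hR, G_one, G_zero]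
  have hJn := (Jf_pos n n).ne'
  norm_num
  field_simp

lemma arith_base (n : ℕ) :
    1/2 - Jf (n+2) n / (2 * Jf n n)
      = 1/2 - 1/4 * (((n+2).choose 1 : ℝ))^2 / (((2*n+4).choose 2 : ℝ)) := by
  rw [Nat.choose_one_right, Nat.cast_choose_two, Jf_val, Jf_val]
  rw [show n+2+n+1 = ((n+n+1)+1)+1 from by omega]
  rw [show n+2 = (n+1)+1 from rfl]
  simp only [Nat.factorial_succ]
  have h1 : ((n.factorial : ℝ)) ≠ 0 := by positivity
  have h2 : (((n+n+1).factorial : ℝ)) ≠ 0 := by positivity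
  push_cast
  have h3 : ((n:ℝ)+1) ≠ 0 := by positivity
  have h4 : ((n:ℝ)+n+1+1 : ℝ) ≠ 0 := by positivity
  have h5 : ((n:ℝ)+n+1+1+1 : ℝ) ≠ 0 := by positivity
  have h6 : (2*(n:ℝ)+4 - 1 : ℝ) ≠ 0 := by
    have : (2*(n:ℝ)+4 - 1 : ℝ) = 2*n+3 := by ring
    rw [this]; positivity
  field_simp
  ring

set_option maxHeartbeats 1000000 in
lemma arith_step (k n : ℕ) :
    1/2 - 1/4 * (((k+n+2).choose (k+1) : ℝ))^2 / (((2*k+2*n+4).choose (2*k+2) : ℝ))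
      + Jf (n+k+2) (n+k+2) / (((k:ℝ)+2)*((k:ℝ)+1)*Jf k k*Jf n n)
      = 1/2 - 1/4 * (((k+1+n+2).choose (k+1+1) : ℝ))^2
          / (((2*(k+1)+2*n+4).choose (2*(k+1)+2) : ℝ)) := by
  have h1 : k+1 ≤ k+n+2 := by omega
  have h2 : 2*k+2 ≤ 2*k+2*n+4 := by omega
  have h3 : k+1+1 ≤ k+1+n+2 := by omega
  have h4 : 2*(k+1)+2 ≤ 2*(k+1)+2*n+4 := by omega
  rw [show n+k+2 = k+n+2 from by omega]
  rw [Nat.cast_choose ℝ h1, Nat.cast_choose ℝ h2, Nat.cast_choose ℝ h3, Nat.cast_choose ℝ h4]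
  rw [show k+n+2-(k+1) = n+1 from by omega, show 2*k+2*n+4-(2*k+2) = 2*n+2 from by omega,
    show k+1+n+2-(k+1+1) = n+1 from by omega,
    show 2*(k+1)+2*n+4-(2*(k+1)+2) = 2*n+2 from by omega]
  rw [Jf_val, Jf_val, Jf_val]
  rw [show k+n+2+(k+n+2)+1 = ((2*k+2*n+4)+1) from by omega]
  rw [show k+1+n+2 = (k+n+2)+1 from by omega]
  rw [show 2*(k+1)+2*n+4 = (((2*k+2*n+4))+1)+1 from by omega]
  rw [show 2*(k+1)+2 = (((k+k+1)+1)+1)+1 from by omega]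
  rw [show 2*k+2 = (k+k+1)+1 from by omega]
  rw [show 2*n+2 = (n+n+1)+1 from by omega]
  have c1 : (((k+1).factorial : ℕ) : ℝ) = ((k:ℝ)+1) * (k.factorial : ℝ) := by
    rw [Nat.factorial_succ]; push_cast; ring
  have c2 : (((n+1).factorial : ℕ) : ℝ) = ((n:ℝ)+1) * (n.factorial : ℝ) := by
    rw [Nat.factorial_succ]; push_cast; ring
  have c3 : (((k+1+1).factorial : ℕ) : ℝ) = ((k:ℝ)+2) * (((k:ℝ)+1) * (k.factorial : ℝ)) := by
    rw [Nat.factorial_succ, Nat.factorial_succ]; push_cast; ring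
  have c4 : ((((k+k+1)+1).factorial : ℕ) : ℝ) = (2*(k:ℝ)+2) * ((k+k+1).factorial : ℝ) := by
    rw [Nat.factorial_succ]; push_cast; ring
  have c5 : ((((n+n+1)+1).factorial : ℕ) : ℝ) = (2*(n:ℝ)+2) * ((n+n+1).factorial : ℝ) := by
    rw [Nat.factorial_succ]; push_cast; ring
  have c6 : ((((k+n+2)+1).factorial : ℕ) : ℝ) = ((k:ℝ)+(n:ℝ)+3) * ((k+n+2).factorial : ℝ) := by
    rw [Nat.factorial_succ]; push_cast; ring
  have c7 : ((((2*k+2*n+4)+1).factorial : ℕ) : ℝ)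
      = (2*(k:ℝ)+2*(n:ℝ)+5) * ((2*k+2*n+4).factorial : ℝ) := by
    rw [Nat.factorial_succ]; push_cast; ring
  have c8 : (((((2*k+2*n+4)+1)+1).factorial : ℕ) : ℝ)
      = (2*(k:ℝ)+2*(n:ℝ)+6) * ((2*(k:ℝ)+2*(n:ℝ)+5) * ((2*k+2*n+4).factorial : ℝ)) := by
    rw [Nat.factorial_succ, Nat.factorial_succ]; push_cast; ring
  have c9 : ((((((k+k+1)+1)+1)+1).factorial : ℕ) : ℝ)
      = (2*(k:ℝ)+4) * ((2*(k:ℝ)+3) * ((2*(k:ℝ)+2) * ((k+k+1).factorial : ℝ))) := by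
    rw [Nat.factorial_succ, Nat.factorial_succ, Nat.factorial_succ]; push_cast; ring
  rw [c8, c9, c3, c6, c7, c4, c5, c1, c2]
  have h5 : ((k.factorial : ℝ)) ≠ 0 := by positivity
  have h6 : ((n.factorial : ℝ)) ≠ 0 := by positivity
  have h7 : (((k+n+2).factorial : ℝ)) ≠ 0 := by positivity
  have h8 : (((k+k+1).factorial : ℝ)) ≠ 0 := by positivity
  have h9 : (((n+n+1).factorial : ℝ)) ≠ 0 := by positivity
  have h10 : (((2*k+2*n+4).factorial : ℝ)) ≠ 0 := by positivity
  have h11 : ((k:ℝ)+1) ≠ 0 := by positivity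
  have h12 : ((k:ℝ)+2) ≠ 0 := by positivity
  have h13 : ((n:ℝ)+1) ≠ 0 := by positivity
  field_simp
  ring
lemma main_int (k n : ℕ) :
    ∫ t in (0:ℝ)..1, G k t * G n t
      = 1/2 - 1/4 * (((k+n+2).choose (k+1) : ℝ))^2
          / (((2*k+2*n+4).choose (2*k+2) : ℝ)) := by
  induction k with
  | zero =>
    have := (parts_base n).trans (arith_base n)
    simpa using this
  | succ k ih =>
    have hsplit : (∫ t in (0:ℝ)..1, G (k+1) t * G n t)
        = ∫ t in (0:ℝ)..1,
            (G k t * G n t + (t^(k+1)*(1-t)^(k+1)*(2*t-1)/(((k:ℝ)+1)*Jf k k)) * G n t) := by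
      congr 1; funext t; rw [G_rec]; ring
    rw [hsplit, integral_add ((show Continuous fun t => G k t * G n t from (G_cont k).mul (G_cont n)).intervalIntegrable 0 1)
      ((show Continuous fun t => (t^(k+1)*(1-t)^(k+1)*(2*t-1)/(((k:ℝ)+1)*Jf k k)) * G n t from (cont_phi k).mul (G_cont n)).intervalIntegrable 0 1), ih, parts_step k n]
    exact arith_step k n

theorem stmt13 (m n : ℕ) (hm : 0 < m) (hn : 0 < n) :
    ∫ t in (0:ℝ)..1, regIncBeta m m t * regIncBeta n n t =
      1 / 2 - (1 / 4) * ((m + n).choose m : ℝ) ^ 2 /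
        ((2 * m + 2 * n).choose (2 * m) : ℝ) := by
  obtain ⟨k, rfl⟩ : ∃ k, m = k + 1 := ⟨m - 1, by omega⟩
  obtain ⟨l, rfl⟩ : ∃ l, n = l + 1 := ⟨n - 1, by omega⟩
  have hL : (∫ t in (0:ℝ)..1, regIncBeta (↑(k+1)) (↑(k+1)) t * regIncBeta (↑(l+1)) (↑(l+1)) t)
      = ∫ t in (0:ℝ)..1, G k t * G l t := by
    congr 1; funext t; rw [regIncBeta_nat, regIncBeta_nat]
  rw [hL, main_int k l]
  rw [show k+1+(l+1) = k+l+2 from by omega, show 2*(k+1)+2*(l+1) = 2*k+2*l+4 from by omega,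
    show 2*(k+1) = 2*k+2 from by omega]
end

section
/- Let f(n) = (4n−1) · [ (4n²+6n+2)/(2(2n+1)²) − (n/(4n+1)) · C(2n,n)²/C(4n,2n) ] for positive integers n, where C(·,·) denotes the binomial coefficient. Then f(n) = 2n − √(2n/π) + O(1) as n → ∞; that is, the sequence f(n) − 2n + √(2n/π) is bounded. (Here f(n) = (4n−1)·ℬ(1,1,n,n+1,n,n+1) is the expected exit time from the square [0,n]² of a step-uniform North/East lattice random walk conditioned to pass through (2n,2n).) -/
set_option maxHeartbeats 1000000

open Real Real.Wallis in
private lemma binom_sq_mul_W (n : ℕ) :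
    (((2*n).choose n : ℝ))^2 * (2*(n:ℝ)+1) * W n = 2^(4*n) := by
  have h := Nat.choose_mul_factorial_mul_factorial (Nat.le_mul_of_pos_left n two_pos : n ≤ 2*n)
  have h2 : (2*n - n) = n := by omega
  rw [h2] at h
  have ha : (((2*n).choose n : ℝ)) * (n.factorial:ℝ)^2 = ((2*n).factorial : ℝ) := by
    push_cast [← h]; ring
  rw [W_eq_factorial_ratio]
  have hf : (0:ℝ) < (n.factorial:ℝ) := by positivity
  have hc : (0:ℝ) < (((2*n).choose n : ℝ)) := by
    exact_mod_cast Nat.choose_pos (Nat.le_mul_of_pos_left n two_pos)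
  rw [← ha]
  field_simp

private lemma le_of_sq_le_sq'' {x y : ℝ} (h : x^2 ≤ y^2) (hx : 0 ≤ x) (hy : 0 ≤ y) : x ≤ y := by
  nlinarith [h, hx, hy]

private lemma key_up (N σ s D pi : ℝ) (hN : 1 ≤ N) (hπ3 : 3 < pi) (hπ0 : 0 < pi)
    (hσnn : 0 ≤ σ) (hsnn : 0 ≤ s) (hDpos : 0 < D)
    (hσub : 2*σ^2 ≤ pi*(4*N+1)) (hDlb : pi*(2*N+1)^2 ≤ 2*(2*N+2)*D)
    (hs2 : s^2 * pi = 2*N) :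
    N*σ ≤ (s+1)*D := by
  apply le_of_sq_le_sq'' _ (by positivity) (by positivity)
  have t1 : 2*(N^2*σ^2) ≤ pi*N^2*(4*N+1) := by
    nlinarith [mul_le_mul_of_nonneg_left hσub (sq_nonneg N)]
  have hD2' : (pi*(2*N+1)^2)^2 ≤ (2*(2*N+2)*D)^2 := pow_le_pow_left₀ (by positivity) hDlb 2
  have c2 : (s^2+1)*((pi*(2*N+1)^2)^2) ≤ (s^2+1)*((2*(2*N+2)*D)^2) :=
    mul_le_mul_of_nonneg_left hD2' (by positivity)
  have e1 : (s^2+1)*((pi*(2*N+1)^2)^2) = 2*N*pi*(2*N+1)^4 + pi^2*(2*N+1)^4 := by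
    linear_combination (pi*(2*N+1)^4) * hs2
  have h3 : 2*N^2*(4*N+1)*(2*N+2)^2 ≤ (2*N+3)*(2*N+1)^4 := by nlinarith [hN]
  have h3' : pi*(2*N^2*(4*N+1)*(2*N+2)^2) ≤ pi*((2*N+3)*(2*N+1)^4) :=
    mul_le_mul_of_nonneg_left h3 hπ0.le
  have h4 : pi*(2*N+3) ≤ 2*N*pi + pi^2 := by nlinarith [hπ3]
  have h4' : (pi*(2*N+3))*((2*N+1)^4) ≤ (2*N*pi + pi^2)*((2*N+1)^4) :=
    mul_le_mul_of_nonneg_right h4 (by positivity)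
  have s1 : (2*(2*N+2)^2) * (2*(N^2*σ^2)) ≤ (2*(2*N+2)^2) * (pi*N^2*(4*N+1)) :=
    mul_le_mul_of_nonneg_left t1 (by positivity)
  have G2 : (4*(2*N+2)^2)*((N*σ)^2) ≤ (4*(2*N+2)^2)*(((s+1)*D)^2) := by
    have w4 : 0 ≤ (4*(2*N+2)^2)*(2*s*D^2) := by positivity
    linarith [s1, h3', h4', e1, c2, w4]
  exact le_of_mul_le_mul_left G2 (by positivity)

private lemma key_lo (N σ s D pi : ℝ) (hN : 1 ≤ N) (hπ3 : 3 < pi) (hπ0 : 0 < pi)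
    (hσnn : 0 ≤ σ) (hsnn : 0 ≤ s) (hDpos : 0 < D) (hσ2 : 2 ≤ σ)
    (hσlb : pi*(4*N+1)^2 ≤ 4*(2*N+1)*σ^2) (hDub : 2*D ≤ pi*(2*N+1))
    (hDlb : pi*(2*N+1)^2 ≤ 2*(2*N+2)*D)
    (hs2 : s^2 * pi = 2*N) :
    s*D ≤ N*σ + D := by
  apply le_of_sq_le_sq'' _ (by positivity) (by positivity)
  have q1 : (2*D)^2 ≤ (pi*(2*N+1))^2 := pow_le_pow_left₀ (by positivity) hDub 2
  have q2 : s^2*((2*D)^2) ≤ s^2*((pi*(2*N+1))^2) :=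
    mul_le_mul_of_nonneg_left q1 (sq_nonneg s)
  have e2 : s^2*((pi*(2*N+1))^2) = 2*N*pi*(2*N+1)^2 := by
    linear_combination (pi*(2*N+1)^2) * hs2
  have k1 : 4*((s*D)^2) ≤ 2*N*pi*(2*N+1)^2 := by nlinarith [q2, e2]
  have u1 : (4*(2*N+1)*(2*N+2))*(4*((s*D)^2)) ≤ (4*(2*N+1)*(2*N+2))*(2*N*pi*(2*N+1)^2) :=
    mul_le_mul_of_nonneg_left k1 (by positivity)
  have x1 : (4*(2*N+2)*N^2)*(pi*(4*N+1)^2) ≤ (4*(2*N+2)*N^2)*(4*(2*N+1)*σ^2) :=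
    mul_le_mul_of_nonneg_left hσlb (by positivity)
  have m1 : (2:ℝ)*D ≤ σ*D := mul_le_mul_of_nonneg_right hσ2 hDpos.le
  have w2 : (32*N*(2*N+1)*(2*N+2))*((2:ℝ)*D) ≤ (32*N*(2*N+1)*(2*N+2))*(σ*D) :=
    mul_le_mul_of_nonneg_left m1 (by positivity)
  have w3 : (32*N*(2*N+1))*(pi*(2*N+1)^2) ≤ (32*N*(2*N+1))*(2*(2*N+2)*D) :=
    mul_le_mul_of_nonneg_left hDlb (by positivity)
  have c4 : 2*(2*N+1)^3*(2*N+2) ≤ N*(4*N+1)^2*(2*N+2) + 8*(2*N+1)^3 := by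
    nlinarith [hN]
  have s5 : (4*N*pi)*(2*(2*N+1)^3*(2*N+2)) ≤ (4*N*pi)*(N*(4*N+1)^2*(2*N+2) + 8*(2*N+1)^3) :=
    mul_le_mul_of_nonneg_left c4 (by positivity)
  have G2 : (16*(2*N+1)*(2*N+2))*((s*D)^2) ≤ (16*(2*N+1)*(2*N+2))*((N*σ+D)^2) := by
    have w4 : 0 ≤ (16*(2*N+1)*(2*N+2))*(D^2) := by positivity
    linarith [u1, x1, w2, w3, s5, w4]
  exact le_of_mul_le_mul_left G2 (by positivity)

private lemma sigma_ge_two (N σ pi : ℝ) (hN : 1 ≤ N) (hπ3 : 3 < pi) (hσnn : 0 ≤ σ)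
    (hσlb : pi*(4*N+1)^2 ≤ 4*(2*N+1)*σ^2) : 2 ≤ σ := by
  have h4 : (2:ℝ)^2 ≤ σ^2 := by nlinarith [hσlb, hπ3, hN]
  exact le_of_sq_le_sq'' h4 (by norm_num) hσnn

private lemma final_bound (N s P : ℝ) (hN : 1 ≤ N) (hsnn : 0 ≤ s) (hP0 : 0 ≤ P)
    (hPle : P ≤ s + 1) (hsle : s ≤ P + 1) (hsN : s ≤ N) :
    |(N-1)/(2*N+1) + s - P*((4*N-1)/(4*N+1))| ≤ 3 := by
  have h2N1 : (0:ℝ) < 2*N+1 := by linarith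
  have h4N1 : (0:ℝ) < 4*N+1 := by linarith
  have hu1 : 0 ≤ (N-1)/(2*N+1) := div_nonneg (by linarith) (by linarith)
  have hu2 : (N-1)/(2*N+1) ≤ 1/2 := by rw [div_le_iff₀ h2N1]; linarith
  have hv1 : P*((4*N-1)/(4*N+1)) ≤ P := by
    have h : (4*N-1)/(4*N+1) ≤ 1 := by rw [div_le_one h4N1]; linarith
    nlinarith [hP0, h]
  have hv2 : P - 1 ≤ P*((4*N-1)/(4*N+1)) := by
    have he : P*((4*N-1)/(4*N+1)) = P - 2*P/(4*N+1) := by field_simp; ring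
    have h2p : 2*P/(4*N+1) ≤ 1 := by
      rw [div_le_one h4N1]; linarith [hPle, hsN]
    rw [he]; linarith
  rw [abs_le]
  constructor <;> linarith [hu1, hu2, hv1, hv2, hPle, hsle, hsnn, hP0]



/-- The expected exit time `(4n−1)·ℬ(1,1,n,n+1,n,n+1)` from the square `[0,n]²` of a
North/East lattice walk conditioned to pass through `(2n,2n)`, in closed form. -/
noncomputable def exitTimeFn (n : ℕ) : ℝ :=
  (4 * n - 1) *
    ((4 * (n:ℝ) ^ 2 + 6 * n + 2) / (2 * (2 * n + 1) ^ 2) -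
      (n / (4 * n + 1)) * ((2 * n).choose n : ℝ) ^ 2 / ((4 * n).choose (2 * n) : ℝ))

open Real Real.Wallis in
/-- `f(n) = 2n − √(2n/π) + O(1)` as `n → ∞`, i.e. the sequence
`f(n) − 2n + √(2n/π)` is bounded. -/
theorem stmt14 :
    ∃ C : ℝ, ∀ n : ℕ, 1 ≤ n →
      |exitTimeFn n - (2 * n - Real.sqrt (2 * n / Real.pi))| ≤ C := by
  refine ⟨3, fun n hn => ?_⟩
  have hπ3 : (3:ℝ) < π := Real.pi_gt_three
  have hπ0 : (0:ℝ) < π := by linarith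
  set N : ℝ := (n:ℝ) with hNdef
  have hN : 1 ≤ N := by rw [hNdef]; exact_mod_cast hn
  set a : ℝ := (((2*n).choose n : ℕ) : ℝ) with hadef
  set d : ℝ := (((4*n).choose (2*n) : ℕ) : ℝ) with hddef
  have hapos : 0 < a := by
    rw [hadef]
    exact_mod_cast Nat.choose_pos (Nat.le_mul_of_pos_left n two_pos : n ≤ 2*n)
  have hdpos : 0 < d := by
    rw [hddef]
    exact_mod_cast Nat.choose_pos (show (2*n) ≤ 4*n by omega)
  have hw1pos : 0 < W n := W_pos n
  have hw2pos : 0 < W (2*n) := W_pos (2*n)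
  have hw1le : W n ≤ π/2 := W_le n
  have hw1ge : (2*N+1)/(2*N+2) * (π/2) ≤ W n := le_W n
  have hw2le : W (2*n) ≤ π/2 := W_le (2*n)
  have hw2ge : (4*N+1)/(4*N+2) * (π/2) ≤ W (2*n) := by
    have := le_W (2*n)
    push_cast at this
    convert this using 3 <;> ring
  have hA : a^2 * (2*N+1) * W n = 2^(4*n) := binom_sq_mul_W n
  have hDid : d^2 * (4*N+1) * W (2*n) = 2^(8*n) := by
    have h := binom_sq_mul_W (2*n)
    rw [show 2*(2*n) = 4*n from by ring, show 4*(2*n) = 8*n from by ring] at h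
    rw [hddef, hNdef]
    push_cast at h ⊢
    linarith [h]
  -- σ
  set σ : ℝ := Real.sqrt ((4*N+1) * W (2*n)) with hσdef
  have hσarg : 0 ≤ (4*N+1) * W (2*n) := by positivity
  have hσsq : σ^2 = (4*N+1) * W (2*n) := Real.sq_sqrt hσarg
  have hσnn : 0 ≤ σ := Real.sqrt_nonneg _
  have hdσ : d * σ = 2^(4*n) := by
    have h1 : (d*σ)^2 = ((2:ℝ)^(4*n))^2 := by
      rw [mul_pow, hσsq, ← pow_mul]
      rw [show 4*n*2 = 8*n by ring, ← hDid]; ring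
    have h2 : 0 ≤ d*σ := by positivity
    calc d*σ = Real.sqrt ((d*σ)^2) := (Real.sqrt_sq h2).symm
    _ = Real.sqrt (((2:ℝ)^(4*n))^2) := by rw [h1]
    _ = 2^(4*n) := Real.sqrt_sq (by positivity)
  -- D
  set D : ℝ := (2*N+1) * W n with hDdef
  have hDpos : 0 < D := by positivity
  have hDub : 2*D ≤ π*(2*N+1) := by
    have : (2*N+1) * W n ≤ (2*N+1) * (π/2) := by
      apply mul_le_mul_of_nonneg_left hw1le; positivity
    rw [hDdef]; linarith
  have hDlb : π*(2*N+1)^2 ≤ 2*(2*N+2)*D := by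
    have h1 : (2*N+2) * ((2*N+1)/(2*N+2) * (π/2)) = (2*N+1)*(π/2) := by
      field_simp
    have h2 : (2*N+2) * ((2*N+1)/(2*N+2) * (π/2)) ≤ (2*N+2) * W n := by
      apply mul_le_mul_of_nonneg_left hw1ge; positivity
    rw [h1] at h2
    have h3 : (2*N+1)*(π/2)*(2*N+1) ≤ (2*N+2) * W n * (2*N+1) := by
      apply mul_le_mul_of_nonneg_right h2; positivity
    rw [hDdef]; nlinarith [h3]
  -- σ bounds
  have hσub : 2*σ^2 ≤ π*(4*N+1) := by
    rw [hσsq]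
    have : (4*N+1) * W (2*n) ≤ (4*N+1) * (π/2) := by
      apply mul_le_mul_of_nonneg_left hw2le; positivity
    linarith
  have hσlb : π*(4*N+1)^2 ≤ 4*(2*N+1)*σ^2 := by
    rw [hσsq]
    have h2 : (4*N+2) * ((4*N+1)/(4*N+2) * (π/2)) ≤ (4*N+2) * W (2*n) := by
      apply mul_le_mul_of_nonneg_left hw2ge; positivity
    have h1 : (4*N+2) * ((4*N+1)/(4*N+2) * (π/2)) = (4*N+1)*(π/2) := by
      field_simp
    rw [h1] at h2
    nlinarith [mul_le_mul_of_nonneg_right h2 (by positivity : (0:ℝ) ≤ 4*N+1)]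
  have hσ2 : 2 ≤ σ := sigma_ge_two N σ π hN hπ3 hσnn hσlb
  -- s
  set s : ℝ := Real.sqrt (2 * N / π) with hsdef
  have hsnn : 0 ≤ s := Real.sqrt_nonneg _
  have hssq : s^2 = 2*N/π := Real.sq_sqrt (by positivity)
  have hs2 : s^2 * π = 2*N := by rw [hssq]; field_simp
  have hup : N*σ ≤ (s+1)*D := key_up N σ s D π hN hπ3 hπ0 hσnn hsnn hDpos hσub hDlb hs2
  have hlo : s*D ≤ N*σ + D := key_lo N σ s D π hN hπ3 hπ0 hσnn hsnn hDpos hσ2 hσlb hDub hDlb hs2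
  have hsN : s ≤ N := le_of_sq_le_sq'' (by nlinarith [hs2, hπ3, hN, hssq]) hsnn (by linarith)
  -- ratio identity
  have hR : a^2/d = σ/D := by
    rw [div_eq_div_iff (ne_of_gt hdpos) (ne_of_gt hDpos)]
    have h : a^2 * D = 2^(4*n) := by rw [hDdef]; linear_combination hA
    rw [h, ← hdσ]; ring
  set P : ℝ := N*σ/D with hPdef
  have hP0 : 0 ≤ P := by positivity
  have hPle : P ≤ s + 1 := by
    rw [hPdef, div_le_iff₀ hDpos]; linarith [hup]
  have hsle : s ≤ P + 1 := by
    have h : s*D ≤ (P+1)*D := by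
      rw [hPdef]; field_simp; linarith [hlo]
    exact le_of_mul_le_mul_right h hDpos
  have h2N1 : (0:ℝ) < 2*N+1 := by linarith
  have h4N1 : (0:ℝ) < 4*N+1 := by linarith
  have key : exitTimeFn n - (2*N - s) = (N-1)/(2*N+1) + s - P*((4*N-1)/(4*N+1)) := by
    unfold exitTimeFn
    rw [← hNdef, ← hadef, ← hddef]
    rw [show (N / (4 * N + 1)) * a ^ 2 / d = (N / (4 * N + 1)) * (a^2/d) by ring, hR, hPdef]
    field_simp
    ring
  rw [show (2 * (n:ℝ) - Real.sqrt (2 * (n:ℝ) / π)) = (2*N - s) by rw [hsdef], key]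
  exact final_bound N s P hN hsnn hP0 hPle hsle hsN
end

section
/- Let M, N, m, n be integers with 1 ≤ m ≤ M and 1 ≤ n ≤ N. Encode a North/East lattice path from (0,0) to (M,N) as a sequence w of M+N steps, each East or North, with exactly M East steps. For such a path let τ(w) = min{ k : 0 ≤ k ≤ M+N and (number of East steps among the first k steps) ≥ M−m+1 or (number of North steps among the first k steps) ≥ N−n+1 }, the exit time of the path from the rectangle with corners (0,0) and (M−m, N−n). Then Σ_w τ(w), summed over all C(M+N, M) such paths, equals C(M+N, M) · (M+N+1) · ℬ(1, 1, m, M−m+1, n, N−n+1). (Equivalently, the expected exit time of a uniformly random North/East path through (M,N) is (M+N+1)·ℬ(1,1,m,M−m+1,n,N−n+1).) -/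
open MeasureTheory
open Finset intervalIntegral

/-- binomial tail sum -/
noncomputable def binTail (Mt mt : ℕ) (t : ℝ) : ℝ :=
  ∑ i ∈ Icc mt Mt, (Mt.choose i : ℝ) * t ^ i * (1 - t) ^ (Mt - i)

lemma uterm_eq (Mt i : ℕ) (t : ℝ) (hi : 1 ≤ i) (hiM : i ≤ Mt) :
    (Mt.choose i : ℝ) * ((Mt : ℝ) - i) * (t ^ i * (1 - t) ^ (Mt - i - 1))
      = ((i+1) * Mt.choose (i+1) : ℕ) * (t ^ ((i+1) - 1) * (1 - t) ^ (Mt - (i+1))) := by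
  rcases eq_or_lt_of_le hiM with rfl | hlt
  · simp [Nat.choose_succ_self]
  · have h1 : ((Mt : ℝ) - i) = ((Mt - i : ℕ) : ℝ) := by
      push_cast [Nat.cast_sub (le_of_lt hlt)]; ring
    have h2 : Mt - i - 1 = Mt - (i+1) := by omega
    have h3 : (i+1) - 1 = i := by omega
    have h4 : (Mt.choose (i+1) * (i+1) : ℕ) = Mt.choose i * (Mt - i) :=
      Nat.choose_succ_right_eq Mt i
    rw [h1, h2, h3]
    have : ((i+1) * Mt.choose (i+1) : ℕ) = (Mt.choose i * (Mt - i) : ℕ) := by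
      rw [mul_comm]; exact h4
    rw [this]
    push_cast
    ring

lemma hasDerivAt_binTail (Mt mt : ℕ) (hm : 1 ≤ mt) (hM : mt ≤ Mt) (t : ℝ) :
    HasDerivAt (binTail Mt mt)
      ((mt * Mt.choose mt : ℕ) * (t ^ (mt - 1) * (1 - t) ^ (Mt - mt))) t := by
  have key : ∀ i ∈ Icc mt Mt, HasDerivAt
      (fun t : ℝ => (Mt.choose i : ℝ) * t ^ i * (1 - t) ^ (Mt - i))
      (((i * Mt.choose i : ℕ) * (t ^ (i - 1) * (1 - t) ^ (Mt - i)) : ℝ)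
        - ((i+1) * Mt.choose (i+1) : ℕ) * (t ^ ((i+1) - 1) * (1 - t) ^ (Mt - (i+1)))) t := by
    intro i hi
    rw [Finset.mem_Icc] at hi
    have hi1 : 1 ≤ i := le_trans hm hi.1
    have hd1 : HasDerivAt (fun t : ℝ => t ^ i) (i * t ^ (i - 1)) t := by
      simpa using hasDerivAt_pow i t
    have hd2 : HasDerivAt (fun t : ℝ => (1 - t) ^ (Mt - i))
        ((Mt - i : ℕ) * (1 - t) ^ (Mt - i - 1) * (-1)) t := by
      exact ((hasDerivAt_id t).const_sub 1).pow _
    have := ((hd1.const_mul (Mt.choose i : ℝ)).mul hd2)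
    refine this.congr_deriv ?_
    rw [← uterm_eq Mt i t hi1 hi.2]
    have hMi : ((Mt - i : ℕ) : ℝ) = (Mt : ℝ) - i := by
      push_cast [Nat.cast_sub hi.2]; ring
    rw [hMi]
    push_cast
    ring
  have hsum := HasDerivAt.sum key
  have : binTail Mt mt = fun t => ∑ i ∈ Icc mt Mt,
      (Mt.choose i : ℝ) * t ^ i * (1 - t) ^ (Mt - i) := rfl
  rw [Finset.sum_fn] at hsum
  rw [this] at *
  refine hsum.congr_deriv (Eq.symm ?_)
  -- telescoping
  rw [← Finset.Ico_add_one_right_eq_Icc, Finset.sum_Ico_eq_sum_range]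
  have hrw : Mt + 1 - mt = (Mt - mt) + 1 := by omega
  rw [hrw]
  set g : ℕ → ℝ := fun r => ((mt + r) * Mt.choose (mt + r) : ℕ)
    * (t ^ (mt + r - 1) * (1 - t) ^ (Mt - (mt + r))) with hg
  have : ∀ r ∈ Finset.range (Mt - mt + 1),
      (((mt + r) * Mt.choose (mt + r) : ℕ) * (t ^ (mt + r - 1) * (1 - t) ^ (Mt - (mt + r))) : ℝ)
        - ((mt + r + 1) * Mt.choose (mt + r + 1) : ℕ)
          * (t ^ ((mt + r + 1) - 1) * (1 - t) ^ (Mt - (mt + r + 1)))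
      = g r - g (r + 1) := by
    intro r hr
    rfl
  rw [Finset.sum_congr rfl this, Finset.sum_range_sub' g]
  have hzero : g (Mt - mt + 1) = 0 := by
    simp only [hg]
    have : Mt.choose (mt + (Mt - mt + 1)) = 0 := Nat.choose_eq_zero_of_lt (by omega)
    rw [this]
    simp
  rw [hzero, sub_zero]
  simp only [hg]
  norm_num

lemma binTail_zero (Mt mt : ℕ) (hm : 1 ≤ mt) : binTail Mt mt 0 = 0 := by
  unfold binTail
  apply Finset.sum_eq_zero
  intro i hi
  rw [Finset.mem_Icc] at hi
  rw [zero_pow (by omega)]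
  ring

lemma binTail_one (Mt mt : ℕ) (hM : mt ≤ Mt) : binTail Mt mt 1 = 1 := by
  unfold binTail
  rw [Finset.sum_eq_single Mt]
  · simp
  · intro i hi hne
    rw [Finset.mem_Icc] at hi
    rw [sub_self, zero_pow (by omega)]
    ring
  · intro h
    exact absurd (Finset.mem_Icc.2 ⟨hM, le_rfl⟩) h

lemma integral_binPow (Mt mt : ℕ) (hm : 1 ≤ mt) (hM : mt ≤ Mt) (x : ℝ) :
    ∫ t in (0:ℝ)..x, t ^ (mt - 1) * (1 - t) ^ (Mt - mt)
      = binTail Mt mt x / ((mt * Mt.choose mt : ℕ) : ℝ) := by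
  have hc : ((mt * Mt.choose mt : ℕ) : ℝ) ≠ 0 := by
    have := Nat.choose_pos hM
    positivity
  have hderiv : ∀ t ∈ Set.uIcc (0:ℝ) x, HasDerivAt (binTail Mt mt)
      (((mt * Mt.choose mt : ℕ) : ℝ) * (t ^ (mt - 1) * (1 - t) ^ (Mt - mt))) t :=
    fun t _ => hasDerivAt_binTail Mt mt hm hM t
  have hint : IntervalIntegrable
      (fun t : ℝ => ((mt * Mt.choose mt : ℕ) : ℝ) * (t ^ (mt - 1) * (1 - t) ^ (Mt - mt)))
      volume 0 x := (Continuous.intervalIntegrable (by fun_prop) _ _)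
  have := intervalIntegral.integral_eq_sub_of_hasDerivAt hderiv hint
  rw [binTail_zero Mt mt hm, sub_zero] at this
  rw [intervalIntegral.integral_const_mul] at this
  rw [eq_div_iff hc, mul_comm]
  push_cast at this ⊢
  linarith [this]

lemma integral_poly (p q : ℕ) :
    ∫ t in (0:ℝ)..1, t ^ p * (1 - t) ^ q
      = (((p+1) * ((p+q+1).choose (p+1)) : ℕ) : ℝ)⁻¹ := by
  have h := integral_binPow (p+q+1) (p+1) (by omega) (by omega) 1
  have h1 : (p+1) - 1 = p := by omega
  have h2 : (p+q+1) - (p+1) = q := by omega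
  rw [h1, h2, binTail_one (p+q+1) (p+1) (by omega)] at h
  rw [h, one_div]

lemma cast_exp1 (mt : ℕ) (hm : 1 ≤ mt) : (mt : ℝ) - 1 = ((mt - 1 : ℕ) : ℝ) := by
  push_cast [Nat.cast_sub hm]; ring

lemma cast_exp2 (Mt mt : ℕ) (hM : mt ≤ Mt) :
    (Mt : ℝ) - (mt : ℝ) + 1 - 1 = ((Mt - mt : ℕ) : ℝ) := by
  push_cast [Nat.cast_sub hM]; ring

lemma betaFn_nat_s18 (Mt mt : ℕ) (hm : 1 ≤ mt) (hM : mt ≤ Mt) :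
    betaFn (mt : ℝ) ((Mt : ℝ) - (mt : ℝ) + 1) = (((mt * Mt.choose mt : ℕ) : ℝ))⁻¹ := by
  unfold betaFn
  simp_rw [cast_exp1 mt hm, cast_exp2 Mt mt hM, Real.rpow_natCast]
  rw [integral_binPow Mt mt hm hM 1, binTail_one Mt mt hM, one_div]

lemma regIncBeta_nat_s18 (Mt mt : ℕ) (hm : 1 ≤ mt) (hM : mt ≤ Mt) (x : ℝ) :
    regIncBeta (mt : ℝ) ((Mt : ℝ) - (mt : ℝ) + 1) x = binTail Mt mt x := by
  have hc : ((mt * Mt.choose mt : ℕ) : ℝ) ≠ 0 := by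
    have := Nat.choose_pos hM
    positivity
  unfold regIncBeta
  rw [betaFn_nat_s18 Mt mt hm hM]
  simp_rw [cast_exp1 mt hm, cast_exp2 Mt mt hM, Real.rpow_natCast]
  rw [integral_binPow Mt mt hm hM x, inv_inv]
  push_cast at hc
  field_simp
  exact mul_div_cancel_left₀ _ (by push_cast; exact hc)

lemma betaFn_one_one : betaFn 1 1 = 1 := by
  unfold betaFn
  norm_num

lemma calB_eval (M N m n : ℕ) (hm1 : 1 ≤ m) (hmM : m ≤ M) (hn1 : 1 ≤ n) (hnN : n ≤ N) :
    calB 1 1 (m : ℝ) ((M : ℝ) - m + 1) (n : ℝ) ((N : ℝ) - n + 1)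
      = ∑ i ∈ Icc m M, ∑ j ∈ Icc n N,
          ((M.choose i * N.choose j : ℕ) : ℝ)
            * (((i+j+1) * ((M+N+1).choose (i+j+1)) : ℕ) : ℝ)⁻¹ := by
  unfold calB
  rw [betaFn_one_one, inv_one, one_mul]
  have hInt : ∀ t : ℝ, t ^ ((1:ℝ)-1) * (1-t) ^ ((1:ℝ)-1)
      * regIncBeta m ((M:ℝ)-m+1) t * regIncBeta n ((N:ℝ)-n+1) t
      = ∑ i ∈ Icc m M, ∑ j ∈ Icc n N, ((M.choose i * N.choose j : ℕ) : ℝ)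
          * (t^(i+j) * (1-t)^((M-i)+(N-j))) := by
    intro t
    rw [sub_self, Real.rpow_zero, Real.rpow_zero, one_mul, one_mul,
      regIncBeta_nat_s18 M m hm1 hmM t, regIncBeta_nat_s18 N n hn1 hnN t]
    unfold binTail
    rw [Finset.sum_mul_sum]
    apply Finset.sum_congr rfl; intro i hi
    apply Finset.sum_congr rfl; intro j hj
    push_cast
    rw [pow_add]
    ring
  simp_rw [hInt]
  rw [intervalIntegral.integral_finset_sum (fun i _ =>
    Continuous.intervalIntegrable (continuous_finset_sum _ (fun j _ => by fun_prop)) _ _)]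
  apply Finset.sum_congr rfl; intro i hi
  rw [intervalIntegral.integral_finset_sum (fun j _ =>
    Continuous.intervalIntegrable (by fun_prop) _ _)]
  apply Finset.sum_congr rfl; intro j hj
  rw [Finset.mem_Icc] at hi hj
  rw [intervalIntegral.integral_const_mul, integral_poly (i+j) ((M-i)+(N-j))]
  have hE : i+j+(M-i+(N-j))+1 = M+N+1 := by omega
  rw [hE]


-- counting subsets with prescribed intersection size
lemma count_inter {α : Type*} [Fintype α] [DecidableEq α] (A : Finset α) (Mc a : ℕ)
    (haM : a ≤ Mc) :
    ((univ.powerset.filter fun S : Finset α => S.card = Mc ∧ (S ∩ A).card = a)).card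
      = A.card.choose a * Aᶜ.card.choose (Mc - a) := by
  rw [← card_powersetCard, ← card_powersetCard, ← card_product]
  apply Finset.card_bij' (fun S _ => (S ∩ A, S \ A)) (fun p _ => p.1 ∪ p.2)
  · rintro S hS
    simp only [mem_filter, mem_powerset] at hS
    obtain ⟨-, hM, ha⟩ := hS
    simp only [mem_product, mem_powersetCard]
    refine ⟨⟨inter_subset_right, ha⟩, ⟨fun x hx => ?_, ?_⟩⟩
    · simp only [mem_sdiff] at hx; simp [hx.2]
    · have := card_inter_add_card_sdiff S A
      omega
  · rintro ⟨s, t⟩ hp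
    simp only [mem_product, mem_powersetCard] at hp
    obtain ⟨⟨hsA, hs⟩, htA, ht⟩ := hp
    have hst : Disjoint s t := by
      refine disjoint_left.2 fun x hxs hxt => ?_
      have := htA hxt; simp at this; exact this (hsA hxs)
    simp only [mem_filter, mem_powerset]
    refine ⟨subset_univ _, ?_, ?_⟩
    · rw [card_union_of_disjoint hst, hs, ht]; omega
    · rw [union_inter_distrib_right, inter_eq_left.2 hsA]
      have : t ∩ A = ∅ := by
        refine eq_empty_of_forall_notMem fun x hx => ?_
        simp only [mem_inter] at hx
        have := htA hx.1; simp at this; exact this hx.2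
      rw [this, union_empty, hs]
  · intro S hS
    rw [union_comm]; exact sdiff_union_inter S A
  · rintro ⟨s, t⟩ hp
    simp only [mem_product, mem_powersetCard] at hp
    obtain ⟨⟨hsA, hs⟩, htA, ht⟩ := hp
    have h1 : (s ∪ t) ∩ A = s := by
      rw [union_inter_distrib_right, inter_eq_left.2 hsA]
      have : t ∩ A = ∅ := by
        refine eq_empty_of_forall_notMem fun x hx => ?_
        simp only [mem_inter] at hx
        have := htA hx.1; simp at this; exact this hx.2
      rw [this, union_empty]
    have h2 : (s ∪ t) \ A = t := by
      rw [union_sdiff_distrib, sdiff_eq_empty_iff_subset.2 hsA, empty_union,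
        Finset.sdiff_eq_self_iff_disjoint.2 (disjoint_left.2 fun x hxt hxA => by
          have := htA hxt; simp at this; exact this hxA)]
    simp [h1, h2]

def eastCount (T : ℕ) (w : Fin T → Bool) (k : ℕ) : ℕ :=
  (Finset.univ.filter fun i : Fin T => (i : ℕ) < k ∧ w i = true).card

def northCount (T : ℕ) (w : Fin T → Bool) (k : ℕ) : ℕ :=
  (Finset.univ.filter fun i : Fin T => (i : ℕ) < k ∧ w i = false).card

lemma Afin (T k : ℕ) (hk : k ≤ T) :
    (univ.filter fun i : Fin T => (i : ℕ) < k) = (range k).attachFin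
      (fun m hm => lt_of_lt_of_le (mem_range.1 hm) hk) := by
  ext i; simp [Finset.mem_attachFin]

lemma Afin_card (T k : ℕ) (hk : k ≤ T) :
    (univ.filter fun i : Fin T => (i : ℕ) < k).card = k := by
  rw [Afin T k hk, Finset.card_attachFin, Finset.card_range]

lemma Afin_compl_card (T k : ℕ) (hk : k ≤ T) :
    ((univ.filter fun i : Fin T => (i : ℕ) < k)ᶜ).card = T - k := by
  rw [Finset.card_compl, Afin_card T k hk]; simp

lemma east_eq_inter (T : ℕ) (w : Fin T → Bool) (k : ℕ) :
    eastCount T w k = ((univ.filter fun i : Fin T => w i = true) ∩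
      (univ.filter fun i : Fin T => (i : ℕ) < k)).card := by
  unfold eastCount; congr 1; ext i; simp [and_comm]

lemma east_total (T : ℕ) (w : Fin T → Bool) :
    eastCount T w T = (univ.filter fun i : Fin T => w i = true).card := by
  unfold eastCount; congr 1; ext i; simp [i.isLt]

lemma north_eq (T : ℕ) (w : Fin T → Bool) (k : ℕ) (hk : k ≤ T) :
    northCount T w k = k - eastCount T w k := by
  have h := Finset.card_filter_add_card_filter_not (s := univ.filter
    fun i : Fin T => (i : ℕ) < k) (p := fun i => w i = true)
  have he : eastCount T w k = ((univ.filter fun i : Fin T => (i:ℕ) < k).filter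
      fun i => w i = true).card := by
    unfold eastCount; congr 1; rw [Finset.filter_filter]
  have hn : northCount T w k = ((univ.filter fun i : Fin T => (i:ℕ) < k).filter
      fun i => ¬ (w i = true)).card := by
    unfold northCount; congr 1; rw [Finset.filter_filter]
    ext i; simp
  rw [Afin_card T k hk] at h
  omega

lemma east_mono (T : ℕ) (w : Fin T → Bool) {k l : ℕ} (h : k ≤ l) :
    eastCount T w k ≤ eastCount T w l := by
  apply Finset.card_le_card
  intro i hi
  simp only [Finset.mem_filter] at *
  exact ⟨hi.1, lt_of_lt_of_le hi.2.1 h, hi.2.2⟩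

lemma north_mono (T : ℕ) (w : Fin T → Bool) {k l : ℕ} (h : k ≤ l) :
    northCount T w k ≤ northCount T w l := by
  apply Finset.card_le_card
  intro i hi
  simp only [Finset.mem_filter] at *
  exact ⟨hi.1, lt_of_lt_of_le hi.2.1 h, hi.2.2⟩

lemma A_card (T k Mc a : ℕ) (hk : k ≤ T) (ha : a ≤ Mc) :
    (univ.filter fun w : Fin T → Bool =>
      eastCount T w T = Mc ∧ eastCount T w k = a).card
      = k.choose a * (T - k).choose (Mc - a) := by
  have key := count_inter (univ.filter fun i : Fin T => (i : ℕ) < k) Mc a ha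
  rw [Afin_card T k hk, Afin_compl_card T k hk] at key
  rw [← key]
  apply Finset.card_bij' (fun w _ => univ.filter fun i : Fin T => w i = true)
    (fun S _ => fun i => decide (i ∈ S))
  · intro w hw
    simp only [mem_filter, mem_univ, true_and] at hw
    simp only [mem_filter, mem_powerset]
    exact ⟨subset_univ _, by rw [← east_total]; exact hw.1,
      by rw [← east_eq_inter]; exact hw.2⟩
  · intro S hS
    simp only [mem_filter, mem_powerset] at hS
    simp only [mem_filter, mem_univ, true_and]
    constructor
    · rw [east_total]
      convert hS.2.1 using 2
      ext i; simp
    · rw [east_eq_inter]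
      convert hS.2.2 using 3
      ext i; simp
  · intro w hw
    funext i
    simp
  · intro S hS
    ext i; simp

noncomputable def exitTime (T Eb Nb : ℕ) (w : Fin T → Bool) : ℕ :=
  sInf {k : ℕ | k ≤ T ∧ (Eb ≤ eastCount T w k ∨ Nb ≤ northCount T w k)}

lemma east_le_k (T : ℕ) (w : Fin T → Bool) (k : ℕ) (hk : k ≤ T) :
    eastCount T w k ≤ k := by
  calc eastCount T w k ≤ (univ.filter fun i : Fin T => (i : ℕ) < k).card := by
        apply Finset.card_le_card
        intro i hi
        simp only [Finset.mem_filter] at *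
        exact ⟨hi.1, hi.2.1⟩
    _ = k := Afin_card T k hk

lemma exitTime_eq_card (M N m n : ℕ) (hm1 : 1 ≤ m) (hmM : m ≤ M)
    (w : Fin (M+N) → Bool) (hw : eastCount (M+N) w (M+N) = M) :
    exitTime (M+N) (M-m+1) (N-n+1) w
      = ((range (M+N+1)).filter fun k =>
          eastCount (M+N) w k ≤ M-m ∧ northCount (M+N) w k ≤ N-n).card := by
  have hTS : M+N ∈ {k : ℕ | k ≤ M+N ∧
      (M-m+1 ≤ eastCount (M+N) w k ∨ N-n+1 ≤ northCount (M+N) w k)} :=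
    ⟨le_rfl, Or.inl (by rw [hw]; omega)⟩
  have hne : Set.Nonempty {k : ℕ | k ≤ M+N ∧
      (M-m+1 ≤ eastCount (M+N) w k ∨ N-n+1 ≤ northCount (M+N) w k)} := ⟨_, hTS⟩
  have hmem := Nat.sInf_mem hne
  unfold exitTime
  obtain ⟨hτT, hcond⟩ := hmem
  have key : ((range (M+N+1)).filter fun k =>
      eastCount (M+N) w k ≤ M-m ∧ northCount (M+N) w k ≤ N-n)
      = range (sInf {k : ℕ | k ≤ M+N ∧
        (M-m+1 ≤ eastCount (M+N) w k ∨ N-n+1 ≤ northCount (M+N) w k)}) := by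
    ext k
    simp only [Finset.mem_filter, Finset.mem_range]
    constructor
    · rintro ⟨hk, he, hn⟩
      by_contra hkτ
      push_neg at hkτ
      rcases hcond with hc | hc
      · have := east_mono (M+N) w hkτ
        omega
      · have := north_mono (M+N) w hkτ
        omega
    · intro hkτ
      have hk : k ≤ M+N := by omega
      have hns := Nat.notMem_of_lt_sInf hkτ
      rw [Set.mem_setOf_eq] at hns
      push_neg at hns
      have := hns hk
      omega
  rw [key, Finset.card_range]

lemma lhs_nat (M N m n : ℕ) (hm1 : 1 ≤ m) (hmM : m ≤ M) (hn1 : 1 ≤ n) (hnN : n ≤ N) :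
    ∑ w ∈ univ.filter (fun w : Fin (M+N) → Bool => eastCount (M+N) w (M+N) = M),
      exitTime (M+N) (M-m+1) (N-n+1) w
    = ∑ k ∈ range (M+N+1), ∑ a ∈ range (M+N+1),
        if a ≤ k ∧ a ≤ M-m ∧ k-a ≤ N-n then k.choose a * (M+N-k).choose (M-a) else 0 := by
  set T := M + N with hT
  calc ∑ w ∈ univ.filter (fun w : Fin T → Bool => eastCount T w T = M),
        exitTime T (M-m+1) (N-n+1) w
      = ∑ w ∈ univ.filter (fun w : Fin T → Bool => eastCount T w T = M),
        ∑ k ∈ range (T+1), if eastCount T w k ≤ M-m ∧ northCount T w k ≤ N-n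
          then 1 else 0 := by
        apply Finset.sum_congr rfl
        intro w hw
        simp only [Finset.mem_filter] at hw
        rw [exitTime_eq_card M N m n hm1 hmM w hw.2, Finset.card_filter]
    _ = ∑ k ∈ range (T+1), ∑ w ∈ univ.filter
          (fun w : Fin T → Bool => eastCount T w T = M),
          if eastCount T w k ≤ M-m ∧ northCount T w k ≤ N-n then 1 else 0 :=
        Finset.sum_comm
    _ = ∑ k ∈ range (T+1), ∑ a ∈ range (T+1),
        if a ≤ k ∧ a ≤ M-m ∧ k-a ≤ N-n then k.choose a * (T-k).choose (M-a) else 0 := by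
        apply Finset.sum_congr rfl
        intro k hk
        rw [Finset.mem_range] at hk
        have hkT : k ≤ T := by omega
        rw [← Finset.card_filter, Finset.filter_filter]
        rw [Finset.card_eq_sum_card_fiberwise
          (f := fun w : Fin T → Bool => eastCount T w k) (t := range (T+1))
          (fun w _ => Finset.mem_range.2
            (Nat.lt_succ_of_le (le_trans (east_le_k T w k hkT) hkT)))]
        apply Finset.sum_congr rfl
        intro a ha
        by_cases hc : a ≤ k ∧ a ≤ M-m ∧ k-a ≤ N-n
        · rw [if_pos hc]
          rw [← A_card T k M a hkT (by omega)]
          congr 1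
          ext w
          simp only [Finset.mem_filter, Finset.mem_univ, true_and]
          constructor
          · rintro ⟨⟨hp, h1, h2⟩, he⟩
            exact ⟨hp, he⟩
          · rintro ⟨hp, he⟩
            have he' : eastCount T w k = a := he
            have hnc := north_eq T w k hkT
            refine ⟨⟨hp, by omega, by omega⟩, he⟩
        · rw [if_neg hc]
          rw [Finset.card_eq_zero]
          rw [Finset.filter_eq_empty_iff]
          intro w hw' hco
          simp only [Finset.mem_filter, Finset.mem_univ, true_and] at hw'
          obtain ⟨hp, h1, h2⟩ := hw'
          obtain ⟨-, he⟩ := hco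
          have hnc := north_eq T w k hkT
          have hle := east_le_k T w k hkT
          first
          | omega
          | (have he' : eastCount T w k = a := he; omega)



lemma fact_ne (k : ℕ) : ((k.factorial : ℚ)) ≠ 0 :=
  Nat.cast_ne_zero.2 (Nat.factorial_ne_zero k)

lemma choose_id (M N i j : ℕ) (hi : i ≤ M) (hj : j ≤ N) :
    ((M-i)+(N-j)).choose (M-i) * (i+j).choose i * (M+N).choose (i+j)
      = (M+N).choose M * (M.choose i * N.choose j) := by
  have key : ((((M-i)+(N-j)).choose (M-i) * (i+j).choose i * (M+N).choose (i+j) : ℕ) : ℚ)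
      = (((M+N).choose M * (M.choose i * N.choose j) : ℕ) : ℚ) := by
    push_cast
    rw [Nat.cast_choose ℚ (le_add_right le_rfl : M-i ≤ (M-i)+(N-j)),
      Nat.cast_choose ℚ (le_add_right le_rfl : i ≤ i+j),
      Nat.cast_choose ℚ (by omega : i+j ≤ M+N),
      Nat.cast_choose ℚ (by omega : M ≤ M+N),
      Nat.cast_choose ℚ hi, Nat.cast_choose ℚ hj]
    have e1 : (M-i)+(N-j) - (M-i) = N-j := by omega
    have e2 : i+j-i = j := by omega
    have e3 : M+N-(i+j) = (M-i)+(N-j) := by omega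
    have e4 : M+N-M = N := by omega
    rw [e1, e2, e3, e4]
    field_simp
  exact_mod_cast key


/-- the sum over all North/East paths from `(0,0)` to `(M,N)` of the
exit time from the rectangle with corners `(0,0)` and `(M−m, N−n)` equals
`C(M+N,M)·(M+N+1)·ℬ(1,1,m,M−m+1,n,N−n+1)`. -/
theorem stmt18 (M N m n : ℕ) (hm1 : 1 ≤ m) (hmM : m ≤ M) (hn1 : 1 ≤ n)
    (hnN : n ≤ N) :
    ∑ w ∈ Finset.univ.filter
        (fun w : Fin (M + N) → Bool => eastCount (M + N) w (M + N) = M),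
      (exitTime (M + N) (M - m + 1) (N - n + 1) w : ℝ) =
      ((M + N).choose M : ℝ) * (M + N + 1) *
        calB 1 1 m ((M : ℝ) - m + 1) n ((N : ℝ) - n + 1) := by
  rw [calB_eval M N m n hm1 hmM hn1 hnN, ← Nat.cast_sum, lhs_nat M N m n hm1 hmM hn1 hnN]
  -- convert RHS terms
  rw [Finset.mul_sum]
  have hterm : ∀ i ∈ Icc m M, ((M + N).choose M : ℝ) * ((M:ℝ) + N + 1) *
      ∑ j ∈ Icc n N, ((M.choose i * N.choose j : ℕ) : ℝ)
        * (((i+j+1) * ((M+N+1).choose (i+j+1)) : ℕ) : ℝ)⁻¹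
      = ∑ j ∈ Icc n N,
        (((M+N).choose M * (M.choose i * N.choose j) : ℕ) : ℝ) / ((M+N).choose (i+j) : ℝ) := by
    intro i hi
    rw [Finset.mul_sum]
    apply Finset.sum_congr rfl
    intro j hj
    rw [Finset.mem_Icc] at hi hj
    have hij : i + j ≤ M + N := by omega
    have hd : (((M+N).choose (i+j) : ℕ) : ℝ) ≠ 0 := by
      have := Nat.choose_pos hij
      positivity
    have hc : ((((i+j+1) * ((M+N+1).choose (i+j+1)) : ℕ)) : ℝ) ≠ 0 := by
      have := Nat.choose_pos (by omega : i+j+1 ≤ M+N+1)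
      positivity
    have hnat : (M+N+1) * ((M+N).choose (i+j)) = (i+j+1) * ((M+N+1).choose (i+j+1)) := by
      have h := Nat.add_one_mul_choose_eq (M+N) (i+j)
      rw [h, Nat.mul_comm]
    have hcast : ((M:ℝ) + N + 1) * ((M+N).choose (i+j) : ℝ)
        = ((((i+j+1) * ((M+N+1).choose (i+j+1)) : ℕ)) : ℝ) := by
      exact_mod_cast congrArg (Nat.cast (R := ℝ)) hnat
    have hT1 : ((M:ℝ)+N+1) ≠ 0 := by positivity
    rw [← hcast, mul_inv]
    push_cast at hd ⊢
    field_simp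
    try ring
  rw [Finset.sum_congr rfl hterm]
  -- LHS: cast through sums and ite
  push_cast
  -- to product form
  have hLHSconv : ∑ p ∈ ((range (M+N+1) ×ˢ range (M+N+1)).filter
      (fun p : ℕ × ℕ => p.2 ≤ p.1 ∧ p.2 ≤ M-m ∧ p.1-p.2 ≤ N-n)),
      ((p.1.choose p.2 : ℝ) * ((M+N-p.1).choose (M-p.2) : ℝ))
      = ∑ k ∈ range (M+N+1), ∑ a ∈ range (M+N+1),
        if a ≤ k ∧ a ≤ M-m ∧ k-a ≤ N-n
        then ((k.choose a : ℝ) * ((M+N-k).choose (M-a) : ℝ)) else 0 := by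
    rw [Finset.sum_filter, Finset.sum_product]
  rw [← hLHSconv]
  rw [← Finset.sum_product' (s := Icc m M) (t := Icc n N)
    (f := fun i j => ((M+N).choose M : ℝ) * ((M.choose i : ℝ) * (N.choose j : ℝ))
      / ((M+N).choose (i+j) : ℝ))]
  apply Finset.sum_nbij' (i := fun p : ℕ × ℕ => (M - p.2, N - (p.1 - p.2)))
    (j := fun q : ℕ × ℕ => ((M - q.1) + (N - q.2), M - q.1))
  · rintro ⟨k, a⟩ hp
    simp only [Finset.mem_filter, Finset.mem_product, Finset.mem_range] at hp
    simp only [Finset.mem_product, Finset.mem_Icc]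
    omega
  · rintro ⟨i, j⟩ hq
    simp only [Finset.mem_product, Finset.mem_Icc] at hq
    simp only [Finset.mem_filter, Finset.mem_product, Finset.mem_range]
    omega
  · rintro ⟨k, a⟩ hp
    simp only [Finset.mem_filter, Finset.mem_product, Finset.mem_range] at hp
    simp only [Prod.mk.injEq]
    omega
  · rintro ⟨i, j⟩ hq
    simp only [Finset.mem_product, Finset.mem_Icc] at hq
    simp only [Prod.mk.injEq]
    omega
  · rintro ⟨k, a⟩ hp
    simp only [Finset.mem_filter, Finset.mem_product, Finset.mem_range] at hp
    obtain ⟨⟨hk, ha⟩, hak, haM, hkN⟩ := hp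
    dsimp only
    have hij : (M - a) + (N - (k - a)) ≤ M + N := by omega
    have hd : (((M+N).choose ((M - a) + (N - (k - a))) : ℕ) : ℝ) ≠ 0 := by
      have := Nat.choose_pos hij
      positivity
    rw [eq_div_iff hd]
    have hid := choose_id M N (M - a) (N - (k - a)) (by omega) (by omega)
    have e1 : M - (M - a) = a := by omega
    have e3 : (M - (M - a)) + (N - (N - (k - a))) = k := by omega
    rw [e3, e1] at hid
    have e4 : (M - a) + (N - (k - a)) = M + N - k := by omega
    rw [e4] at hid ⊢
    have hidR : ((k.choose a : ℝ)) * (((M+N-k).choose (M-a) : ℕ) : ℝ)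
        * (((M+N).choose (M+N-k) : ℕ) : ℝ)
        = (((M+N).choose M : ℕ) : ℝ) * (((M.choose (M-a) : ℕ) : ℝ)
          * (((N.choose (N-(k-a))) : ℕ) : ℝ)) := by
      exact_mod_cast congrArg (Nat.cast (R := ℝ)) hid
    linear_combination hidR
end

section
/- For every positive integer n, Σ_{k=n+1}^{2n+1} 2k · C(k−1, n) / 2^k = 2(n+1) − (2n+1) · C(2n, n) / 4^n, where C(·,·) denotes the binomial coefficient. (This is the expected exit time from the square [0,n]² of an unconditioned random walk on the lattice which at each step moves East or North with equal probability; the right side equals 2(n+1) − 2Γ(n+3/2)/(√π · Γ(n+1)).) -/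
open Finset

lemma choose_double (m : ℕ) : (2*m+2).choose (m+1) = 2 * (2*m+1).choose (m+1) := by
  have h : (2*m+2).choose (m+1) = (2*m+1).choose m + (2*m+1).choose (m+1) :=
    Nat.choose_succ_succ' (2*m+1) m
  have hs : (2*m+1).choose m = (2*m+1).choose (m+1) := by
    have := Nat.choose_symm (n := 2*m+1) (k := m+1) (by omega)
    rw [show 2*m+1-(m+1) = m from by omega] at this
    omega
  omega

lemma auxA (m : ℕ) :
    ∑ j ∈ range (m + 1), ((m + j).choose j : ℚ) / 2 ^ j = 2 ^ m := by
  induction m with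
  | zero => simp
  | succ m ih =>
    show ∑ j ∈ range (m + 2), ((m + 1 + j).choose j : ℚ) / 2 ^ j = 2 ^ (m+1)
    set S : ℚ := ∑ j ∈ range (m + 2), ((m + 1 + j).choose j : ℚ) / 2 ^ j with hS
    have h1 : S = (∑ j ∈ range (m+1), ((m + 2 + j).choose (j+1) : ℚ) / 2 ^ (j+1)) + 1 := by
      rw [hS, Finset.sum_range_succ']
      congr 1
      · exact Finset.sum_congr rfl fun j _ => by
          rw [show m + 1 + (j+1) = m + 2 + j from by omega]
      · simp
    have h2 : ∀ j : ℕ, ((m + 2 + j).choose (j+1) : ℚ)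
        = ((m+1+j).choose j : ℚ) + ((m+1+j).choose (j+1) : ℚ) := by
      intro j
      rw [show m + 2 + j = (m + 1 + j) + 1 from by omega, Nat.choose_succ_succ]
      push_cast; ring
    have h3 : S = (1/2) * ∑ j ∈ range (m+1), ((m + 1 + j).choose j : ℚ) / 2 ^ j
        + (∑ j ∈ range (m+1), ((m + 1 + j).choose (j+1) : ℚ) / 2 ^ (j+1)) + 1 := by
      rw [h1, Finset.mul_sum, ← Finset.sum_add_distrib]
      congr 1
      apply Finset.sum_congr rfl
      intro j _
      rw [h2 j]
      field_simp
      ring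
    have h4 : S = (∑ j ∈ range (m+1), ((m + 1 + j).choose j : ℚ) / 2 ^ j)
        + ((2*m+2).choose (m+1) : ℚ) / 2 ^ (m+1) := by
      rw [hS, Finset.sum_range_succ, show m + 1 + (m+1) = 2*m+2 from by omega]
    have h5 : ∑ j ∈ range (m+1), ((m + 1 + j).choose (j+1) : ℚ) / 2 ^ (j+1)
        = (∑ j ∈ range (m+1), ((m + j).choose j : ℚ) / 2 ^ j)
          + ((2*m+1).choose (m+1) : ℚ) / 2 ^ (m+1) - 1 := by
      have e1 : ∑ j ∈ range (m+2), ((m + j).choose j : ℚ) / 2 ^ j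
          = (∑ j ∈ range (m+1), ((m + 1 + j).choose (j+1) : ℚ) / 2 ^ (j+1)) + 1 := by
        rw [Finset.sum_range_succ']
        congr 1
        · exact Finset.sum_congr rfl fun j _ => by
            rw [show m + (j+1) = m + 1 + j from by omega]
        · simp
      have e2 : ∑ j ∈ range (m+2), ((m + j).choose j : ℚ) / 2 ^ j
          = (∑ j ∈ range (m+1), ((m + j).choose j : ℚ) / 2 ^ j)
            + ((2*m+1).choose (m+1) : ℚ) / 2 ^ (m+1) := by
        rw [Finset.sum_range_succ, show m + (m+1) = 2*m+1 from by omega]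
      linarith [e1, e2]
    have hdc : ((2*m+2).choose (m+1) : ℚ) = 2 * ((2*m+1).choose (m+1) : ℚ) := by
      exact_mod_cast congrArg (Nat.cast : ℕ → ℚ) (choose_double m)
    rw [ih] at h5
    have hdd : (2 * ((2*m+1).choose (m+1) : ℚ)) / 2 ^ (m+1)
        = 2 * (((2*m+1).choose (m+1) : ℚ) / 2 ^ (m+1)) := by ring
    have hp : (2:ℚ) ^ (m+1) = 2 * 2 ^ m := by ring
    rw [hdc, hdd] at h4
    rw [h5] at h3
    linarith [h3, h4, hp]


/-- `Σ_{k=n+1}^{2n+1} 2k·C(k−1,n)/2^k = 2(n+1) − (2n+1)·C(2n,n)/4^n`,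
the expected exit time from `[0,n]²` of an unconditioned North/East random walk. -/
theorem stmt19 (n : ℕ) (hn : 0 < n) :
    ∑ k ∈ Finset.Icc (n + 1) (2 * n + 1),
        2 * (k : ℚ) * ((k - 1).choose n : ℚ) / 2 ^ k =
      2 * (n + 1 : ℚ) - (2 * n + 1) * ((2 * n).choose n : ℚ) / 4 ^ n := by
  have H : ∑ j ∈ range (n + 2), ((n + 1 + j).choose j : ℚ) / 2 ^ j = 2 ^ (n+1) :=
    auxA (n+1)
  have hT : ∑ j ∈ range (n+1), ((n+1+j).choose j : ℚ) / 2 ^ j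
      = 2^(n+1) - ((2*n+2).choose (n+1) : ℚ) / 2^(n+1) := by
    have e := Finset.sum_range_succ (fun j => ((n+1+j).choose j : ℚ)/2^j) (n+1)
    rw [show n+1+(n+1) = 2*n+2 from by omega] at e
    have : ∑ j ∈ range (n+2), ((n+1+j).choose j : ℚ) / 2 ^ j
        = ∑ j ∈ range (n+1), ((n+1+j).choose j : ℚ)/2^j + ((2*n+2).choose (n+1) : ℚ)/2^(n+1) := e
    linarith [H, this]
  rw [show Finset.Icc (n+1) (2*n+1) = Finset.Ico (n+1) (2*n+2) from by
    rw [show 2*n+2 = (2*n+1)+1 from rfl, Finset.Ico_add_one_right_eq_Icc]]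
  rw [Finset.sum_Ico_eq_sum_range, show 2*n+2-(n+1) = n+1 from by omega]
  have key : ∀ j ∈ range (n+1),
      2 * ((n+1+j : ℕ) : ℚ) * (((n+1+j-1).choose n : ℕ) : ℚ) / 2 ^ (n+1+j)
        = (((n:ℚ)+1) / 2^n) * (((n+1+j).choose j : ℚ) / 2 ^ j) := by
    intro j _
    have hnat : (n+j+1) * ((n+j).choose n) = ((n+j+1).choose j) * (n+1) := by
      have h1 := Nat.add_one_mul_choose_eq (n+j) n
      have h2 : (n+j+1).choose (n+1) = (n+j+1).choose j := by
        have := Nat.choose_symm (n := n+j+1) (k := n+1) (by omega)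
        rw [show n+j+1-(n+1) = j from by omega] at this
        omega
      rw [← h2]
      exact h1
    have hq : ((n:ℚ)+j+1) * ((n+j).choose n : ℚ) = ((n+j+1).choose j : ℚ) * ((n:ℚ)+1) := by
      exact_mod_cast congrArg (Nat.cast : ℕ → ℚ) hnat
    rw [show n+1+j-1 = n+j from by omega]
    have hp : (2:ℚ) ^ (n+1+j) = 2 * 2^n * 2^j := by
      rw [show n+1+j = (n+1)+j from rfl, pow_add, pow_succ]; ring
    rw [hp]
    push_cast
    rw [show n+1+j = n+j+1 from by omega] at *
    push_cast at hq ⊢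
    have h2n : (2:ℚ)^n ≠ 0 := by positivity
    have h2j : (2:ℚ)^j ≠ 0 := by positivity
    field_simp
    linear_combination hq
  rw [Finset.sum_congr rfl key, ← Finset.mul_sum, hT]
  have hc : ((n:ℚ)+1) * ((2*n+2).choose (n+1) : ℚ) = 2*(2*(n:ℚ)+1)*((2*n).choose n : ℚ) := by
    have h1 := Nat.add_one_mul_choose_eq (2*n) n
    have hq1 : (2*(n:ℚ)+1) * ((2*n).choose n : ℚ) = ((2*n+1).choose (n+1) : ℚ) * ((n:ℚ)+1) := by
      exact_mod_cast congrArg (Nat.cast : ℕ → ℚ) h1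
    have hq2 : ((2*n+2).choose (n+1) : ℚ) = 2 * ((2*n+1).choose (n+1) : ℚ) := by
      exact_mod_cast congrArg (Nat.cast : ℕ → ℚ) (choose_double n)
    linear_combination ((n:ℚ)+1)*hq2 - 2*hq1
  have h4 : (4:ℚ)^n = 2^n * 2^n := by
    rw [show (4:ℚ) = 2*2 from by norm_num, mul_pow]
  have h2n : (2:ℚ)^n ≠ 0 := by positivity
  rw [h4]
  push_cast
  field_simp
  linear_combination (-(2:ℚ)^n) * hc
end
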